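/- arXiv:2604.02673 — 3 statements merged into one kernel-verified Lean document; each statement's English description precedes it below -/
import Mathlib

section
/- In SSL, ¬S_aφ → K_a¬S_aφ is derivable for every agent a and formula φ. -/
/-- Formulas of the epistemic-secrecy language: atoms, ⊤, ¬, ∧, K_a, S_a
(→, ↔, ⊥ are defined by abbreviation). -/
inductive Form (A P : Type) : Type where
  | atom : P → Form A P
  | top : Form A P
  | neg : Form A P → Form A P
  | and : Form A P → Form A P → Form A P
  | K : A → Form A P → Form A P
  | S : A → Form A P → Form A P

namespace Form
variable {A P : Type}
/-- Material implication, defined from ¬ and ∧. -/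
def imp (φ ψ : Form A P) : Form A P := neg (and φ (neg ψ))
/-- Biconditional. -/
def iff (φ ψ : Form A P) : Form A P := and (imp φ ψ) (imp ψ φ)
/-- Falsum. -/
def bot : Form A P := neg top
end Form

/-- A boolean interpretation of formulas: any assignment of truth values to formulas
that respects ⊤, ¬ and ∧ (treating atoms and modal formulas as atomic). -/
def PropEval {A P : Type} (g : Form A P → Prop) : Prop :=
  g Form.top ∧ (∀ φ : Form A P, g (Form.neg φ) ↔ ¬ g φ) ∧
    (∀ φ ψ : Form A P, g (Form.and φ ψ) ↔ (g φ ∧ g ψ))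

/-- The Hilbert system SSL: all instances of propositional tautologies, the S5 axioms
(K), (T), (4), (5) for each K_a, the secrecy axioms (S1) S_aφ → K_aφ,
(S2) S_aφ → ¬K_bφ for b ≠ a, (S4) S_aφ → K_aS_aφ, with rules modus ponens,
knowledge necessitation, and replacement of provable equivalents under S_a. -/
inductive Prov {A P : Type} : Form A P → Prop
  | taut (φ : Form A P) :
      (∀ g : Form A P → Prop, PropEval g → g φ) → Prov φ
  | axK (a : A) (φ ψ : Form A P) :
      Prov ((Form.K a (φ.imp ψ)).imp ((Form.K a φ).imp (Form.K a ψ)))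
  | axT (a : A) (φ : Form A P) : Prov ((Form.K a φ).imp φ)
  | ax4 (a : A) (φ : Form A P) : Prov ((Form.K a φ).imp (Form.K a (Form.K a φ)))
  | ax5 (a : A) (φ : Form A P) :
      Prov ((Form.neg (Form.K a φ)).imp (Form.K a (Form.neg (Form.K a φ))))
  | axS1 (a : A) (φ : Form A P) : Prov ((Form.S a φ).imp (Form.K a φ))
  | axS2 {a b : A} (φ : Form A P) :
      b ≠ a → Prov ((Form.S a φ).imp (Form.neg (Form.K b φ)))
  | axS4 (a : A) (φ : Form A P) : Prov ((Form.S a φ).imp (Form.K a (Form.S a φ)))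
  | mp {φ ψ : Form A P} : Prov (φ.imp ψ) → Prov φ → Prov ψ
  | nec (a : A) {φ : Form A P} : Prov φ → Prov (Form.K a φ)
  | re (a : A) {φ ψ : Form A P} :
      Prov (φ.iff ψ) → Prov ((Form.S a φ).iff (Form.S a ψ))

lemma Prov.comp {A P : Type} {φ ψ χ : Form A P}
    (h1 : Prov (φ.imp ψ)) (h2 : Prov (ψ.imp χ)) : Prov (φ.imp χ) := by
  have t : Prov ((φ.imp ψ).imp ((ψ.imp χ).imp (φ.imp χ))) := by
    apply Prov.taut
    rintro g ⟨ht, hn, ha⟩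
    simp only [Form.imp, hn, ha, not_and, not_not]
    tauto
  exact (t.mp h1).mp h2

lemma Prov.contra {A P : Type} {φ ψ : Form A P}
    (h : Prov (φ.imp ψ)) : Prov ((Form.neg ψ).imp (Form.neg φ)) := by
  have t : Prov ((φ.imp ψ).imp ((Form.neg ψ).imp (Form.neg φ))) := by
    apply Prov.taut
    rintro g ⟨ht, hn, ha⟩
    simp only [Form.imp, hn, ha, not_and, not_not]
    tauto
  exact t.mp h

/-- In SSL, `¬S_a φ → K_a ¬S_a φ` is derivable for every agent `a` and formula `φ`. -/
theorem ssl_negative_introspection_secrecy {A P : Type} (a : A) (φ : Form A P) :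
    Prov ((Form.neg (Form.S a φ)).imp (Form.K a (Form.neg (Form.S a φ)))) := by
  set s := Form.S a φ with hs
  set k := Form.K a s with hk
  -- ¬s → ¬k  (contrapositive of T)
  have h1 : Prov ((Form.neg s).imp (Form.neg k)) := (Prov.axT a s).contra
  -- ¬k → K¬k  (axiom 5)
  have h2 : Prov ((Form.neg k).imp (Form.K a (Form.neg k))) := Prov.ax5 a s
  -- ¬k → ¬s  (contrapositive of S4)
  have h3 : Prov ((Form.neg k).imp (Form.neg s)) := (Prov.axS4 a φ).contra
  -- K¬k → K¬s
  have h4 : Prov ((Form.K a (Form.neg k)).imp (Form.K a (Form.neg s))) :=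
    (Prov.axK a (Form.neg k) (Form.neg s)).mp (Prov.nec a h3)
  exact (h1.comp h2).comp h4
end

section
/- In SSL, for distinct agents a, b: S_aφ → ¬K_bS_aφ and S_aφ → ¬K_b¬S_aφ are derivable (higher-order opacity). -/
lemma prov_mp2 {A P : Type} {c1 c2 p : Form A P} (h1 : Prov c1) (h2 : Prov c2)
    (h : ∀ g : Form A P → Prop, PropEval g → g c1 → g c2 → g p) : Prov p := by
  refine Prov.mp (Prov.mp (Prov.taut (c1.imp (c2.imp p)) ?_) h1) h2
  rintro g ⟨gt, gn, ga⟩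
  simp only [Form.imp, gn, ga]
  have := h g ⟨gt, gn, ga⟩
  tauto

lemma prov_mp1 {A P : Type} {c1 p : Form A P} (h1 : Prov c1)
    (h : ∀ g : Form A P → Prop, PropEval g → g c1 → g p) : Prov p := by
  refine Prov.mp (Prov.taut (c1.imp p) ?_) h1
  rintro g ⟨gt, gn, ga⟩
  simp only [Form.imp, gn, ga]
  have := h g ⟨gt, gn, ga⟩
  tauto

/-- Higher-order opacity: in SSL, for distinct agents `a, b`, both
`S_a φ → ¬K_b S_a φ` and `S_a φ → ¬K_b ¬S_a φ` are derivable. -/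
theorem ssl_higher_order_opacity {A P : Type} (a b : A) (hab : a ≠ b) (φ : Form A P) :
    Prov ((Form.S a φ).imp (Form.neg (Form.K b (Form.S a φ)))) ∧
    Prov ((Form.S a φ).imp (Form.neg (Form.K b (Form.neg (Form.S a φ))))) := by
  have hSphi : Prov ((Form.S a φ).imp φ) :=
    prov_mp2 (Prov.axS1 a φ) (Prov.axT a φ) (by
      rintro g ⟨gt, gn, ga⟩
      simp only [Form.imp, gn, ga]; tauto)
  have hK : Prov ((Form.K b (Form.S a φ)).imp (Form.K b φ)) :=
    Prov.mp (Prov.axK b _ _) (Prov.nec b hSphi)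
  constructor
  · exact prov_mp2 (Prov.axS2 φ hab.symm) hK (by
      rintro g ⟨gt, gn, ga⟩
      simp only [Form.imp, gn, ga]; tauto)
  · exact prov_mp1 (Prov.axT b (Form.neg (Form.S a φ))) (by
      rintro g ⟨gt, gn, ga⟩
      simp only [Form.imp, gn, ga]; tauto)
end

section
/- In SSL, if χ → K_bχ is derivable, then for every agent a ≠ b, ¬S_aχ is derivable. In particular ¬S_aK_bψ, ¬S_a¬K_bψ, ¬S_aS_bψ, and ¬S_a¬S_bψ are all derivable for distinct a, b. -/
section Helpers
variable {A P : Type}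

lemma eval_imp {g : Form A P → Prop} (hg : PropEval g) (φ ψ : Form A P) :
    g (φ.imp ψ) ↔ (g φ → g ψ) := by
  obtain ⟨_, hn, ha⟩ := hg
  simp only [Form.imp, hn, ha]; tauto

lemma prov_trans {φ ψ χ : Form A P} (h1 : Prov (φ.imp ψ)) (h2 : Prov (ψ.imp χ)) :
    Prov (φ.imp χ) := by
  refine Prov.mp (Prov.mp (Prov.taut ((φ.imp ψ).imp ((ψ.imp χ).imp (φ.imp χ))) ?_) h1) h2
  intro g hg; simp only [eval_imp hg]; tauto

lemma prov_contra {φ ψ : Form A P} (h : Prov (φ.imp ψ)) :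
    Prov ((Form.neg ψ).imp (Form.neg φ)) := by
  refine Prov.mp (Prov.taut ((φ.imp ψ).imp ((Form.neg ψ).imp (Form.neg φ))) ?_) h
  intro g hg; simp only [eval_imp hg, hg.2.1]; tauto

lemma prov_combine {φ ψ : Form A P} (h1 : Prov (φ.imp ψ)) (h2 : Prov (φ.imp (Form.neg ψ))) :
    Prov (Form.neg φ) := by
  refine Prov.mp (Prov.mp (Prov.taut ((φ.imp ψ).imp ((φ.imp ψ.neg).imp φ.neg)) ?_) h1) h2
  intro g hg; simp only [eval_imp hg, hg.2.1]; tauto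

lemma prov_Kmono (b : A) {φ ψ : Form A P} (h : Prov (φ.imp ψ)) :
    Prov ((Form.K b φ).imp (Form.K b ψ)) :=
  Prov.mp (Prov.axK b φ ψ) (Prov.nec b h)

end Helpers

/-- No foreign secrets about `b`-local facts: if `χ → K_b χ` is derivable then `¬S_a χ`
is derivable for every `a ≠ b`; in particular `¬S_a K_b ψ`, `¬S_a ¬K_b ψ`,
`¬S_a S_b ψ`, and `¬S_a ¬S_b ψ` are all derivable for distinct `a, b`. -/
theorem ssl_no_foreign_local_secrets {A P : Type} (a b : A) (hab : a ≠ b) :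
    (∀ χ : Form A P, Prov (χ.imp (Form.K b χ)) → Prov (Form.neg (Form.S a χ))) ∧
    (∀ ψ : Form A P,
      Prov (Form.neg (Form.S a (Form.K b ψ))) ∧
      Prov (Form.neg (Form.S a (Form.neg (Form.K b ψ)))) ∧
      Prov (Form.neg (Form.S a (Form.S b ψ))) ∧
      Prov (Form.neg (Form.S a (Form.neg (Form.S b ψ))))) := by
  have main : ∀ χ : Form A P, Prov (χ.imp (Form.K b χ)) → Prov (Form.neg (Form.S a χ)) := by
    intro χ h
    have h1 : Prov ((Form.S a χ).imp χ) := prov_trans (Prov.axS1 a χ) (Prov.axT a χ)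
    have h2 : Prov ((Form.S a χ).imp (Form.K b χ)) := prov_trans h1 h
    exact prov_combine h2 (Prov.axS2 χ hab.symm)
  refine ⟨main, fun ψ => ⟨?_, ?_, ?_, ?_⟩⟩
  · exact main _ (Prov.ax4 b ψ)
  · exact main _ (Prov.ax5 b ψ)
  · exact main _ (Prov.axS4 b ψ)
  · refine main _ ?_
    have h1 : Prov ((Form.neg (Form.S b ψ)).imp (Form.neg (Form.K b (Form.S b ψ)))) :=
      prov_contra (Prov.axT b (Form.S b ψ))
    have h2 := Prov.ax5 b (Form.S b ψ)
    have h3 : Prov ((Form.K b (Form.neg (Form.K b (Form.S b ψ)))).imp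
        (Form.K b (Form.neg (Form.S b ψ)))) :=
      prov_Kmono b (prov_contra (Prov.axS4 b ψ))
    exact prov_trans (prov_trans h1 h2) h3
end
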